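/- arXiv:1803.01819 — 6 statements merged into one kernel-verified Lean document; each statement's English description precedes it below -/
import Mathlib

section
/- Let τ > 0, let T_p ∈ [0, τ], and let h : ℝ → ℂ be integrable with h(t) = 0 for all t ∉ [0, T_p]. Let L ∈ ℕ, and for each l < L let α_l ∈ ℂ, ν_l ∈ ℝ, and τ_l ∈ [0, τ − T_p]. Fix p ∈ ℕ and define the aligned frame r_p : ℝ → ℂ by r_p(t) = Σ_{l<L} α_l · h(t − τ_l) · exp(−i ν_l p τ). Then for every integer k, ∫_{0}^{τ} r_p(t) · exp(−2πi k t / τ) dt = Ĥ(k/τ) · Σ_{l<L} α_l · exp(−2πi k τ_l / τ) · exp(−i ν_l p τ), where Ĥ(f) = ∫_ℝ h(t) · exp(−2πi f t) dt is the continuous-time Fourier transform of h. -/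
open MeasureTheory Complex Real

private lemma exp_norm_one (a t : ℝ) :
    ‖Complex.exp ((a : ℂ) * Complex.I * (t : ℂ))‖ = 1 := by
  have : (a : ℂ) * Complex.I * (t : ℂ) = ((a * t : ℝ) : ℂ) * Complex.I := by
    push_cast; ring
  rw [this]
  exact Complex.norm_exp_ofReal_mul_I _

private lemma mulE_integrable (h : ℝ → ℂ) (hint : Integrable h) (a c : ℝ) :
    Integrable (fun t : ℝ => h (t - c) * Complex.exp ((a : ℂ) * Complex.I * (t : ℂ))) := by
  have hm : AEStronglyMeasurable
      (fun t : ℝ => h (t - c) * Complex.exp ((a : ℂ) * Complex.I * (t : ℂ))) volume := by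
    exact (hint.comp_sub_right c).aestronglyMeasurable.mul
      (Complex.continuous_exp.comp (by fun_prop)).aestronglyMeasurable
  refine Integrable.mono' ((hint.comp_sub_right c).norm) hm ?_
  filter_upwards with t
  rw [norm_mul, exp_norm_one, mul_one]

private lemma key_shift (τ Tp : ℝ) (hτ : 0 < τ) (hTp0 : 0 ≤ Tp)
    (h : ℝ → ℂ) (hint : Integrable h)
    (hsupp : ∀ t : ℝ, t ∉ Set.Icc (0:ℝ) Tp → h t = 0)
    (c : ℝ) (hc0 : 0 ≤ c) (hc1 : c ≤ τ - Tp) (a : ℝ) :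
    ∫ t in (0:ℝ)..τ, h (t - c) * Complex.exp ((a : ℂ) * Complex.I * (t : ℂ))
      = (∫ t : ℝ, h t * Complex.exp ((a : ℂ) * Complex.I * (t : ℂ)))
        * Complex.exp ((a : ℂ) * Complex.I * (c : ℂ)) := by
  have hE : ∀ t : ℝ, Complex.exp ((a : ℂ) * Complex.I * (t : ℂ))
      = Complex.exp ((a : ℂ) * Complex.I * ((t - c : ℝ) : ℂ))
        * Complex.exp ((a : ℂ) * Complex.I * (c : ℂ)) := by
    intro t
    rw [← Complex.exp_add]
    congr 1
    push_cast
    ring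
  calc ∫ t in (0:ℝ)..τ, h (t - c) * Complex.exp ((a : ℂ) * Complex.I * (t : ℂ))
      = ∫ t in (0:ℝ)..τ,
          (fun u : ℝ => h u * Complex.exp ((a : ℂ) * Complex.I * (u : ℂ))
            * Complex.exp ((a : ℂ) * Complex.I * (c : ℂ))) (t - c) := by
        apply intervalIntegral.integral_congr
        intro t _
        beta_reduce
        rw [hE t]
        ring
    _ = ∫ u in (0 - c)..(τ - c),
          h u * Complex.exp ((a : ℂ) * Complex.I * (u : ℂ))
            * Complex.exp ((a : ℂ) * Complex.I * (c : ℂ)) := by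
        exact intervalIntegral.integral_comp_sub_right
          (fun u : ℝ => h u * Complex.exp ((a : ℂ) * Complex.I * (u : ℂ))
            * Complex.exp ((a : ℂ) * Complex.I * (c : ℂ))) c
    _ = (∫ u in (0 - c)..(τ - c),
          h u * Complex.exp ((a : ℂ) * Complex.I * (u : ℂ)))
            * Complex.exp ((a : ℂ) * Complex.I * (c : ℂ)) :=
        intervalIntegral.integral_mul_const _ _
    _ = (∫ t : ℝ, h t * Complex.exp ((a : ℂ) * Complex.I * (t : ℂ)))
        * Complex.exp ((a : ℂ) * Complex.I * (c : ℂ)) := by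
        congr 1
        have hle : 0 - c ≤ τ - c := by linarith
        rw [intervalIntegral.integral_of_le hle, ← integral_Icc_eq_integral_Ioc]
        apply setIntegral_eq_integral_of_forall_compl_eq_zero
        intro x hx
        have : x ∉ Set.Icc (0:ℝ) Tp := by
          intro hx'
          exact hx ⟨by linarith [hx'.1], by linarith [hx'.2]⟩
        rw [hsupp x this, zero_mul]

/-- The Fourier series coefficient over `[0, τ]` of one aligned received pulse frame equals the
continuous-time Fourier transform of the pulse at `k/τ` times the sum of delay/Doppler phase
factors. -/
theorem fourier_coeff_of_aligned_frame
    (τ Tp : ℝ) (hτ : 0 < τ) (hTp : Tp ∈ Set.Icc (0:ℝ) τ)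
    (h : ℝ → ℂ) (hint : Integrable h)
    (hsupp : ∀ t : ℝ, t ∉ Set.Icc (0:ℝ) Tp → h t = 0)
    (L : ℕ) (α : Fin L → ℂ) (ν : Fin L → ℝ) (τd : Fin L → ℝ)
    (hτd : ∀ l, τd l ∈ Set.Icc (0:ℝ) (τ - Tp))
    (p : ℕ) (k : ℤ) :
    ∫ t in (0:ℝ)..τ,
        (∑ l, α l * h (t - τd l) * Complex.exp (-Complex.I * (ν l : ℂ) * (p : ℂ) * (τ : ℂ)))
          * Complex.exp (-2 * (π : ℂ) * Complex.I * (k : ℂ) * (t : ℂ) / (τ : ℂ))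
      = (∫ t : ℝ, h t * Complex.exp (-2 * (π : ℂ) * Complex.I * (((k : ℝ) / τ : ℝ) : ℂ) * (t : ℂ)))
        * ∑ l, α l * Complex.exp (-2 * (π : ℂ) * Complex.I * (k : ℂ) * ((τd l : ℝ) : ℂ) / (τ : ℂ))
            * Complex.exp (-Complex.I * (ν l : ℂ) * (p : ℂ) * (τ : ℂ)) := by
  set a : ℝ := -2 * π * (k : ℝ) / τ with ha
  have hτne : (τ : ℂ) ≠ 0 := by exact_mod_cast hτ.ne'
  -- rewrite the exponential in the canonical `a * I * t` form
  have hEt : ∀ t : ℝ, Complex.exp (-2 * (π : ℂ) * Complex.I * (k : ℂ) * (t : ℂ) / (τ : ℂ))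
      = Complex.exp ((a : ℂ) * Complex.I * (t : ℂ)) := by
    intro t
    congr 1
    rw [ha]
    push_cast
    ring
  -- the big Fourier transform term
  have hH : (∫ t : ℝ, h t * Complex.exp (-2 * (π : ℂ) * Complex.I * (((k : ℝ) / τ : ℝ) : ℂ) * (t : ℂ)))
      = ∫ t : ℝ, h t * Complex.exp ((a : ℂ) * Complex.I * (t : ℂ)) := by
    congr 1
    funext t
    congr 2
    rw [ha]
    push_cast
    ring
  have hD : ∀ l : Fin L, Complex.exp (-Complex.I * (ν l : ℂ) * (p : ℂ) * (τ : ℂ)) =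
      Complex.exp (-Complex.I * (ν l : ℂ) * (p : ℂ) * (τ : ℂ)) := fun _ => rfl
  calc ∫ t in (0:ℝ)..τ,
        (∑ l, α l * h (t - τd l) * Complex.exp (-Complex.I * (ν l : ℂ) * (p : ℂ) * (τ : ℂ)))
          * Complex.exp (-2 * (π : ℂ) * Complex.I * (k : ℂ) * (t : ℂ) / (τ : ℂ))
      = ∫ t in (0:ℝ)..τ, ∑ l, (α l * Complex.exp (-Complex.I * (ν l : ℂ) * (p : ℂ) * (τ : ℂ)))
            * (h (t - τd l) * Complex.exp ((a : ℂ) * Complex.I * (t : ℂ))) := by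
        apply intervalIntegral.integral_congr
        intro t _
        beta_reduce
        rw [Finset.sum_mul, hEt t]
        apply Finset.sum_congr rfl
        intro l _
        ring
    _ = ∑ l, ∫ t in (0:ℝ)..τ, (α l * Complex.exp (-Complex.I * (ν l : ℂ) * (p : ℂ) * (τ : ℂ)))
            * (h (t - τd l) * Complex.exp ((a : ℂ) * Complex.I * (t : ℂ))) := by
        apply intervalIntegral.integral_finset_sum
        intro l _
        exact ((mulE_integrable h hint a (τd l)).const_mul _).intervalIntegrable
    _ = ∑ l, (α l * Complex.exp (-Complex.I * (ν l : ℂ) * (p : ℂ) * (τ : ℂ)))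
            * ((∫ t : ℝ, h t * Complex.exp ((a : ℂ) * Complex.I * (t : ℂ)))
              * Complex.exp ((a : ℂ) * Complex.I * ((τd l : ℝ) : ℂ))) := by
        apply Finset.sum_congr rfl
        intro l _
        rw [intervalIntegral.integral_const_mul,
          key_shift τ Tp hτ hTp.1 h hint hsupp (τd l) (hτd l).1 (hτd l).2 a]
    _ = (∫ t : ℝ, h t * Complex.exp (-2 * (π : ℂ) * Complex.I * (((k : ℝ) / τ : ℝ) : ℂ) * (t : ℂ)))
        * ∑ l, α l * Complex.exp (-2 * (π : ℂ) * Complex.I * (k : ℂ) * ((τd l : ℝ) : ℂ) / (τ : ℂ))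
            * Complex.exp (-Complex.I * (ν l : ℂ) * (p : ℂ) * (τ : ℂ)) := by
        rw [hH, Finset.mul_sum]
        apply Finset.sum_congr rfl
        intro l _
        rw [hEt (τd l)]
        ring
end

section
/- Let τ > 0, C ∈ ℕ, v_d ∈ ℝ, σ_d ≥ 0, and σ_c > 0. On a probability space, let (α_c, τ_c, v_c) for c = 1, …, C be mutually independent random variables such that: each α_c is complex-valued with E[α_c] = 0 and E[|α_c|²] = σ_c²; each τ_c is uniformly distributed on [0, τ]; and each v_c is Gaussian with mean v_d and variance σ_d². For integers p ≥ 0 and k, define the clutter Fourier coefficients c̃_p[k] = (1/τ) Σ_{c=1}^{C} α_c · exp(−2πi k τ_c / τ) · exp(−i v_c p τ). Then E[c̃_p[k]] = 0 for all p and k, and for all integers k₁, k₂ and all integers l ≥ 0, E[c̃_p[k₁] · conj(c̃_{p+l}[k₂])] = (1/τ²) · C · σ_c² · δ_{k₁,k₂} · exp(i v_d l τ − σ_d² l² τ² / 2), where δ_{k₁,k₂} equals 1 if k₁ = k₂ and 0 otherwise. -/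
open MeasureTheory ProbabilityTheory Complex Real
open scoped ENNReal NNReal

/-- Value type of the `3C` clutter random variables: the `c`-th amplitude is complex-valued,
the `c`-th delay and the `c`-th Doppler are real-valued. -/
def clutterType (C : ℕ) : Fin C ⊕ Fin C ⊕ Fin C → Type
  | .inl _ => ℂ
  | .inr (.inl _) => ℝ
  | .inr (.inr _) => ℝ

noncomputable instance clutterTypeMeasurableSpace (C : ℕ) (i : Fin C ⊕ Fin C ⊕ Fin C) :
    MeasurableSpace (clutterType C i) := by
  cases i with
  | inl _ => exact (inferInstance : MeasurableSpace ℂ)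
  | inr j =>
    cases j with
    | inl _ => exact (inferInstance : MeasurableSpace ℝ)
    | inr _ => exact (inferInstance : MeasurableSpace ℝ)

/-- The family of all `3C` clutter random variables: amplitudes `α`, delays `τc`, Dopplers `vc`. -/
def clutterVars {Ω : Type*} {C : ℕ} (α : Fin C → Ω → ℂ) (τc vc : Fin C → Ω → ℝ) :
    ∀ i : Fin C ⊕ Fin C ⊕ Fin C, Ω → clutterType C i
  | .inl c => α c
  | .inr (.inl c) => τc c
  | .inr (.inr c) => vc c

/-- The clutter Fourier coefficient `c̃_p[k] = (1/τ) ∑_c α_c e^{-2πik τ_c/τ} e^{-i v_c p τ}`. -/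
noncomputable def clutterCoeff {Ω : Type*} {C : ℕ} (τ : ℝ) (α : Fin C → Ω → ℂ)
    (τc vc : Fin C → Ω → ℝ) (p : ℕ) (k : ℤ) (ω : Ω) : ℂ :=
  (1 / (τ : ℂ)) * ∑ c, α c ω
      * Complex.exp (-2 * (π : ℂ) * Complex.I * (k : ℂ) * ((τc c ω : ℝ) : ℂ) / (τ : ℂ))
      * Complex.exp (-Complex.I * ((vc c ω : ℝ) : ℂ) * (p : ℂ) * (τ : ℂ))


lemma indep_integral_mul_ℂ {Ω : Type*} [MeasurableSpace Ω] {μ : Measure Ω}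
    [IsProbabilityMeasure μ] {X Y : Ω → ℂ} (h : IndepFun X Y μ)
    (hX : AEMeasurable X μ) (hY : AEMeasurable Y μ) :
    ∫ ω, X ω * Y ω ∂μ = (∫ ω, X ω ∂μ) * ∫ ω, Y ω ∂μ := by
  have hp : AEMeasurable (fun ω => (X ω, Y ω)) μ := hX.prodMk hY
  have hsm : AEStronglyMeasurable (fun p : ℂ × ℂ => p.1 * p.2)
      (μ.map (fun ω => (X ω, Y ω))) := by fun_prop
  calc ∫ ω, X ω * Y ω ∂μ
      = ∫ p : ℂ × ℂ, p.1 * p.2 ∂(μ.map (fun ω => (X ω, Y ω))) := (integral_map hp hsm).symm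
    _ = ∫ p : ℂ × ℂ, p.1 * p.2 ∂((μ.map X).prod (μ.map Y)) := by
        rw [(indepFun_iff_map_prod_eq_prod_map_map hX hY).mp h]
    _ = (∫ x, id x ∂(μ.map X)) * ∫ y, id y ∂(μ.map Y) := integral_prod_mul id id
    _ = (∫ ω, X ω ∂μ) * ∫ ω, Y ω ∂μ := by
        rw [integral_map (f := id) hX aestronglyMeasurable_id,
          integral_map (f := id) hY aestronglyMeasurable_id]; rfl

lemma uniform_exp_integral {τ : ℝ} (hτ : 0 < τ) (m : ℤ) :
    ∫ x : ℝ, Complex.exp (-2 * (π : ℂ) * Complex.I * (m : ℂ) * (x : ℂ) / (τ : ℂ))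
        ∂((ENNReal.ofReal τ)⁻¹ • volume.restrict (Set.Icc (0:ℝ) τ))
      = if m = 0 then 1 else 0 := by
  have hτ' : (τ : ℂ) ≠ 0 := Complex.ofReal_ne_zero.mpr hτ.ne'
  rw [integral_smul_measure]
  have htr : ((ENNReal.ofReal τ)⁻¹).toReal = τ⁻¹ := by
    rw [ENNReal.toReal_inv, ENNReal.toReal_ofReal hτ.le]
  rw [htr]
  by_cases hm : m = 0
  · subst hm
    simp only [Int.cast_zero, mul_zero, zero_mul, zero_div, Complex.exp_zero, if_true]
    rw [integral_const]
    simp [Real.volume_Icc, hτ.le, ENNReal.toReal_ofReal, smul_eq_mul]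
    rw [inv_mul_cancel₀ hτ']
  · rw [if_neg hm]
    set c : ℂ := -2 * (π : ℂ) * Complex.I * (m : ℂ) / (τ : ℂ) with hc
    have hcne : c ≠ 0 := by
      rw [hc]
      apply div_ne_zero _ hτ'
      simp [Complex.I_ne_zero, Real.pi_ne_zero, hm]
    have harg : ∀ x : ℝ, -2 * (π : ℂ) * Complex.I * (m : ℂ) * (x : ℂ) / (τ : ℂ) = c * x := by
      intro x; rw [hc]; ring
    simp_rw [harg]
    rw [MeasureTheory.integral_Icc_eq_integral_Ioc,
      ← intervalIntegral.integral_of_le hτ.le, integral_exp_mul_complex hcne]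
    have h1 : c * (τ : ℂ) = -2 * (π : ℂ) * Complex.I * (m : ℂ) := by
      rw [hc]; field_simp
    have h2 : Complex.exp (c * (τ : ℂ)) = 1 := by
      rw [h1]
      have := Complex.exp_int_mul_two_pi_mul_I (-m)
      rw [← this]
      congr 1
      push_cast
      ring
    rw [h2]
    simp

lemma gaussian_char {m σ2 : ℝ} (hσ2 : 0 ≤ σ2) (t : ℝ) :
    ∫ x : ℝ, Complex.exp (Complex.I * (t : ℂ) * (x : ℂ)) ∂(gaussianReal m σ2.toNNReal)
      = Complex.exp (Complex.I * (t : ℂ) * (m : ℂ) - (σ2 : ℂ) * (t : ℂ) ^ 2 / 2) := by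
  by_cases h0 : σ2 = 0
  · subst h0
    simp only [Real.toNNReal_zero, gaussianReal_zero_var]
    rw [integral_dirac]
    norm_num
  · have hσpos : 0 < σ2 := lt_of_le_of_ne hσ2 (Ne.symm h0)
    have hv : σ2.toNNReal ≠ 0 := by
      simp [Real.toNNReal_eq_zero, not_le, hσpos]
    have hσC : (σ2 : ℂ) ≠ 0 := Complex.ofReal_ne_zero.mpr h0
    have hvr : ((σ2.toNNReal : ℝ)) = σ2 := Real.coe_toNNReal _ hσ2
    rw [gaussianReal_of_var_ne_zero _ hv]
    have hpdf : gaussianPDF m σ2.toNNReal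
        = fun x => ((fun x => (gaussianPDFReal m σ2.toNNReal x).toNNReal) x : ℝ≥0∞) := by
      funext x; simp [gaussianPDF, ENNReal.ofReal]
    rw [hpdf, integral_withDensity_eq_integral_smul
      ((measurable_gaussianPDFReal _ _).real_toNNReal)]
    set b : ℂ := -(1 / (2 * (σ2 : ℂ))) with hb
    set c : ℂ := (m : ℂ) / σ2 + Complex.I * t with hc
    set d : ℂ := -(m : ℂ)^2 / (2 * σ2) with hd
    have hbre : b.re < 0 := by
      rw [hb]
      simp [Complex.div_re, Complex.normSq]
      positivity
    set N : ℝ := Real.sqrt (2 * π * σ2) with hN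
    have hNpos : 0 < N := Real.sqrt_pos.mpr (by positivity)
    have hint : ∀ x : ℝ, ((gaussianPDFReal m σ2.toNNReal x).toNNReal : ℝ)
          • Complex.exp (Complex.I * (t : ℂ) * (x : ℂ))
        = ((N⁻¹ : ℝ) : ℂ) * Complex.exp (b * (x:ℂ)^2 + c * (x:ℂ) + d) := by
      intro x
      rw [Real.coe_toNNReal _ (gaussianPDFReal_nonneg _ _ x)]
      rw [gaussianPDFReal, hvr]
      push_cast
      rw [← hN]
      rw [real_smul]
      push_cast
      rw [mul_assoc, ← Complex.exp_add]
      congr 2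
      rw [hb, hc, hd]
      field_simp
      ring
    simp_rw [NNReal.smul_def, hint]
    rw [integral_const_mul, integral_cexp_quadratic hbre]
    have hπb : (π : ℂ) / -b = ((2 * π * σ2 : ℝ) : ℂ) := by
      rw [hb]; push_cast; rw [neg_neg, div_div_eq_mul_div]; ring
    have hpow : ((π : ℂ) / -b) ^ (1/2 : ℂ) = (N : ℂ) := by
      rw [hπb, hN, Real.sqrt_eq_rpow]
      rw [show (1/2 : ℂ) = ((1/2 : ℝ) : ℂ) by norm_num]
      rw [← Complex.ofReal_cpow (by positivity)]
    rw [hpow]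
    have hexp : d - c^2 / (4 * b) = Complex.I * (t : ℂ) * (m : ℂ) - (σ2 : ℂ) * (t : ℂ) ^ 2 / 2 := by
      rw [hb, hc, hd]
      field_simp
      ring_nf
      rw [Complex.I_sq]
      ring
    rw [hexp, ← mul_assoc]
    norm_cast
    rw [inv_mul_cancel₀ hNpos.ne']
    simp
open MeasureTheory ProbabilityTheory Complex Real
open scoped ENNReal NNReal

noncomputable def cE1 (τ : ℝ) (k : ℤ) (t : ℝ) : ℂ :=
  Complex.exp (-2 * (π : ℂ) * Complex.I * (k : ℂ) * (t : ℂ) / (τ : ℂ))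

noncomputable def cE2 (τ : ℝ) (p : ℕ) (v : ℝ) : ℂ :=
  Complex.exp (-Complex.I * (v : ℂ) * (p : ℂ) * (τ : ℂ))

lemma cE1_meas (τ : ℝ) (k : ℤ) : Measurable (cE1 τ k) := by unfold cE1; fun_prop

lemma cE2_meas (τ : ℝ) (p : ℕ) : Measurable (cE2 τ p) := by unfold cE2; fun_prop

lemma norm_cE1 (τ : ℝ) (k : ℤ) (t : ℝ) : ‖cE1 τ k t‖ = 1 := by
  unfold cE1
  rw [show -2 * (π : ℂ) * Complex.I * (k : ℂ) * (t : ℂ) / (τ : ℂ)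
      = ((-2 * π * k * t / τ : ℝ) : ℂ) * Complex.I by push_cast; ring]
  rw [Complex.norm_exp_ofReal_mul_I]

lemma norm_cE2 (τ : ℝ) (p : ℕ) (v : ℝ) : ‖cE2 τ p v‖ = 1 := by
  unfold cE2
  rw [show -Complex.I * (v : ℂ) * (p : ℂ) * (τ : ℂ)
      = ((-(v * p * τ) : ℝ) : ℂ) * Complex.I by push_cast; ring]
  rw [Complex.norm_exp_ofReal_mul_I]

lemma cE1_mul_conj (τ : ℝ) (k₁ k₂ : ℤ) (t : ℝ) :
    cE1 τ k₁ t * (starRingEnd ℂ) (cE1 τ k₂ t)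
      = Complex.exp (-2 * (π : ℂ) * Complex.I * (((k₁ - k₂ : ℤ)) : ℂ) * (t : ℂ) / (τ : ℂ)) := by
  unfold cE1
  rw [← Complex.exp_conj, ← Complex.exp_add]
  congr 1
  rw [map_div₀]
  simp only [map_mul, map_neg, map_ofNat, Complex.conj_ofReal, Complex.conj_I, map_intCast]
  rw [← add_div]
  congr 1
  push_cast
  ring

lemma cE2_mul_conj (τ : ℝ) (p l : ℕ) (v : ℝ) :
    cE2 τ p v * (starRingEnd ℂ) (cE2 τ (p + l) v)
      = Complex.exp (Complex.I * ((l * τ : ℝ) : ℂ) * (v : ℂ)) := by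
  unfold cE2
  rw [← Complex.exp_conj, ← Complex.exp_add]
  congr 1
  simp only [map_mul, map_neg, Complex.conj_ofReal, Complex.conj_I, map_natCast]
  push_cast
  ring




lemma clutter_indep_triples {Ω : Type*} [MeasureSpace Ω] [IsProbabilityMeasure (ℙ : Measure Ω)]
    {C : ℕ} {α : Fin C → Ω → ℂ} {τc vc : Fin C → Ω → ℝ}
    (hindep : iIndepFun (m := fun i => clutterTypeMeasurableSpace C i)
      (clutterVars α τc vc) (ℙ : Measure Ω))
    (hm : ∀ i, Measurable (clutterVars α τc vc i))
    {c c' : Fin C} (hcc : c ≠ c') :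
    IndepFun (fun ω => (α c ω, τc c ω, vc c ω)) (fun ω => (α c' ω, τc c' ω, vc c' ω))
      (ℙ : Measure Ω) := by
  classical
  have hd : Disjoint
      ({Sum.inl c, Sum.inr (Sum.inl c), Sum.inr (Sum.inr c)} : Finset (Fin C ⊕ Fin C ⊕ Fin C))
      {Sum.inl c', Sum.inr (Sum.inl c'), Sum.inr (Sum.inr c')} := by
    simp [Finset.disjoint_left]
    aesop
  have h := hindep.indepFun_finset _ _ hd hm
  let g : ∀ (x : Fin C),
      (∀ i : ({Sum.inl x, Sum.inr (Sum.inl x), Sum.inr (Sum.inr x)} :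
        Finset (Fin C ⊕ Fin C ⊕ Fin C)), clutterType C i) → ℂ × ℝ × ℝ :=
    fun x v => (v ⟨Sum.inl x, by simp⟩, v ⟨Sum.inr (Sum.inl x), by simp⟩,
      v ⟨Sum.inr (Sum.inr x), by simp⟩)
  have hg : ∀ x, Measurable (g x) := fun x =>
    (measurable_pi_apply _).prodMk ((measurable_pi_apply _).prodMk (measurable_pi_apply _))
  exact h.comp (hg c) (hg c')

lemma clutterCoeff_eq {Ω : Type*} {C : ℕ} (τ : ℝ) (α : Fin C → Ω → ℂ)
    (τc vc : Fin C → Ω → ℝ) (p : ℕ) (k : ℤ) (ω : Ω) :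
    clutterCoeff τ α τc vc p k ω
      = (1 / (τ : ℂ)) * ∑ c, α c ω * cE1 τ k (τc c ω) * cE2 τ p (vc c ω) := rfl

/-- First and second moments of the clutter Fourier coefficients: they are zero mean,
uncorrelated across distinct frequency indices, and their slow-time correlation is governed by
the Gaussian characteristic function of the clutter Doppler spectrum. -/
theorem clutter_fourier_coeff_moments
    {Ω : Type*} [MeasureSpace Ω] [IsProbabilityMeasure (ℙ : Measure Ω)]
    (τ : ℝ) (hτ : 0 < τ) (C : ℕ) (vd σd σc : ℝ) (hσd : 0 ≤ σd) (hσc : 0 < σc)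
    (α : Fin C → Ω → ℂ) (τc : Fin C → Ω → ℝ) (vc : Fin C → Ω → ℝ)
    (hαm : ∀ c, Measurable (α c)) (hτcm : ∀ c, Measurable (τc c))
    (hvcm : ∀ c, Measurable (vc c))
    (hindep : iIndepFun (m := fun i => clutterTypeMeasurableSpace C i)
      (clutterVars α τc vc) (ℙ : Measure Ω))
    (hαint : ∀ c, Integrable (α c) (ℙ : Measure Ω))
    (hαsqint : ∀ c, Integrable (fun ω => ‖α c ω‖ ^ 2) (ℙ : Measure Ω))
    (hαmean : ∀ c, ∫ ω, α c ω = 0)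
    (hαvar : ∀ c, ∫ ω, ‖α c ω‖ ^ 2 = σc ^ 2)
    (hτunif : ∀ c, Measure.map (τc c) (ℙ : Measure Ω)
      = (ENNReal.ofReal τ)⁻¹ • (volume.restrict (Set.Icc (0:ℝ) τ)))
    (hvgauss : ∀ c, Measure.map (vc c) (ℙ : Measure Ω)
      = gaussianReal vd (Real.toNNReal (σd ^ 2))) :
    (∀ (p : ℕ) (k : ℤ), ∫ ω, clutterCoeff τ α τc vc p k ω = 0) ∧
    (∀ (p l : ℕ) (k₁ k₂ : ℤ),
      ∫ ω, clutterCoeff τ α τc vc p k₁ ω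
          * (starRingEnd ℂ) (clutterCoeff τ α τc vc (p + l) k₂ ω)
        = (1 / (τ : ℂ) ^ 2) * (C : ℂ) * (σc : ℂ) ^ 2 * (if k₁ = k₂ then 1 else 0)
            * Complex.exp (Complex.I * (vd : ℂ) * (l : ℂ) * (τ : ℂ)
                - (σd : ℂ) ^ 2 * (l : ℂ) ^ 2 * (τ : ℂ) ^ 2 / 2)) := by
  classical
  have mconj : Measurable (starRingEnd ℂ) := Complex.continuous_conj.measurable
  have hm : ∀ i, Measurable (clutterVars α τc vc i) := by
    rintro (c | c | c)
    exacts [hαm c, hτcm c, hvcm c]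
  have hTmeas : ∀ (p : ℕ) (k : ℤ) (c : Fin C),
      Measurable (fun ω => α c ω * cE1 τ k (τc c ω) * cE2 τ p (vc c ω)) := fun p k c =>
    ((hαm c).mul ((cE1_meas τ k).comp (hτcm c))).mul ((cE2_meas τ p).comp (hvcm c))
  have hTnorm : ∀ (p : ℕ) (k : ℤ) (c : Fin C) (ω : Ω),
      ‖α c ω * cE1 τ k (τc c ω) * cE2 τ p (vc c ω)‖ = ‖α c ω‖ := by
    intro p k c ω
    rw [norm_mul, norm_mul, norm_cE1, norm_cE2, mul_one, mul_one]
  have hTint : ∀ (p : ℕ) (k : ℤ) (c : Fin C),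
      Integrable (fun ω => α c ω * cE1 τ k (τc c ω) * cE2 τ p (vc c ω)) (ℙ : Measure Ω) :=
    fun p k c => Integrable.mono' (hαint c).norm (hTmeas p k c).aestronglyMeasurable
      (Filter.Eventually.of_forall fun ω => le_of_eq (hTnorm p k c ω))
  have hpairall : ∀ c : Fin C,
      IndepFun (fun ω => (τc c ω, vc c ω)) (α c) (ℙ : Measure Ω) := fun c =>
    hindep.indepFun_prodMk hm (Sum.inr (Sum.inl c)) (Sum.inr (Sum.inr c)) (Sum.inl c)
      (by simp) (by simp)
  have hTmean : ∀ (p : ℕ) (k : ℤ) (c : Fin C),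
      ∫ ω, α c ω * cE1 τ k (τc c ω) * cE2 τ p (vc c ω) = 0 := by
    intro p k c
    have hφ : Measurable (fun q : ℝ × ℝ => cE1 τ k q.1 * cE2 τ p q.2) :=
      ((cE1_meas τ k).comp measurable_fst).mul ((cE2_meas τ p).comp measurable_snd)
    have hI : IndepFun (fun ω => cE1 τ k (τc c ω) * cE2 τ p (vc c ω)) (α c) (ℙ : Measure Ω) :=
      (hpairall c).comp hφ measurable_id
    calc ∫ ω, α c ω * cE1 τ k (τc c ω) * cE2 τ p (vc c ω)
        = ∫ ω, (cE1 τ k (τc c ω) * cE2 τ p (vc c ω)) * α c ω := by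
          refine integral_congr_ae (Filter.Eventually.of_forall fun ω => ?_)
          ring
      _ = (∫ ω, cE1 τ k (τc c ω) * cE2 τ p (vc c ω)) * ∫ ω, α c ω :=
          indep_integral_mul_ℂ hI
            (((cE1_meas τ k).comp (hτcm c)).mul ((cE2_meas τ p).comp (hvcm c))).aemeasurable
            (hαm c).aemeasurable
      _ = 0 := by rw [hαmean c, mul_zero]
  constructor
  · -- first moment
    intro p k
    have : ∫ ω, clutterCoeff τ α τc vc p k ω
        = (1 / (τ : ℂ)) * ∑ c, ∫ ω, α c ω * cE1 τ k (τc c ω) * cE2 τ p (vc c ω) := by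
      simp_rw [clutterCoeff_eq]
      rw [integral_const_mul, integral_finset_sum _ (fun c _ => hTint p k c)]
    rw [this]
    simp [hTmean p k]
  · -- second moment
    intro p l k₁ k₂
    set κ : ℂ := Complex.exp (Complex.I * (vd : ℂ) * (l : ℂ) * (τ : ℂ)
      - (σd : ℂ) ^ 2 * (l : ℂ) ^ 2 * (τ : ℂ) ^ 2 / 2) with hκ
    have hconj1τ : (starRingEnd ℂ) (1 / (τ : ℂ)) = 1 / (τ : ℂ) := by
      rw [map_div₀, map_one, Complex.conj_ofReal]
    -- pointwise expansion into a double sum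
    have step1 : ∀ ω : Ω, clutterCoeff τ α τc vc p k₁ ω
          * (starRingEnd ℂ) (clutterCoeff τ α τc vc (p + l) k₂ ω)
        = (1 / (τ : ℂ) * (1 / (τ : ℂ)))
          * ∑ c, ∑ c', (α c ω * cE1 τ k₁ (τc c ω) * cE2 τ p (vc c ω))
            * (starRingEnd ℂ) (α c' ω * cE1 τ k₂ (τc c' ω) * cE2 τ (p + l) (vc c' ω)) := by
      intro ω
      rw [clutterCoeff_eq, clutterCoeff_eq, map_mul, map_sum, hconj1τ, mul_mul_mul_comm,
        Finset.sum_mul_sum]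
    -- integrability of each term in the double sum
    have hSint : ∀ c c' : Fin C,
        Integrable (fun ω => (α c ω * cE1 τ k₁ (τc c ω) * cE2 τ p (vc c ω))
          * (starRingEnd ℂ) (α c' ω * cE1 τ k₂ (τc c' ω) * cE2 τ (p + l) (vc c' ω)))
          (ℙ : Measure Ω) := by
      intro c c'
      have hmeas : Measurable (fun ω => (α c ω * cE1 τ k₁ (τc c ω) * cE2 τ p (vc c ω))
          * (starRingEnd ℂ) (α c' ω * cE1 τ k₂ (τc c' ω) * cE2 τ (p + l) (vc c' ω))) :=
        (hTmeas p k₁ c).mul (mconj.comp (hTmeas (p + l) k₂ c'))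
      have hnorm : ∀ ω, ‖(α c ω * cE1 τ k₁ (τc c ω) * cE2 τ p (vc c ω))
          * (starRingEnd ℂ) (α c' ω * cE1 τ k₂ (τc c' ω) * cE2 τ (p + l) (vc c' ω))‖
          = ‖α c ω‖ * ‖α c' ω‖ := by
        intro ω
        rw [norm_mul, RCLike.norm_conj, hTnorm, hTnorm]
      by_cases hcc : c = c'
      · subst hcc
        refine Integrable.mono' (hαsqint c) hmeas.aestronglyMeasurable
          (Filter.Eventually.of_forall fun ω => le_of_eq ?_)
        rw [hnorm ω, sq]
      · have hbound : Integrable (fun ω => ‖α c ω‖ * ‖α c' ω‖) (ℙ : Measure Ω) := by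
          have hαind : IndepFun (α c) (α c') (ℙ : Measure Ω) :=
            hindep.indepFun (show (Sum.inl c : Fin C ⊕ Fin C ⊕ Fin C) ≠ Sum.inl c' by
              simp [hcc])
          have hi : IndepFun (fun ω => ‖α c ω‖) (fun ω => ‖α c' ω‖) (ℙ : Measure Ω) :=
            hαind.comp measurable_norm measurable_norm
          exact hi.integrable_mul (hαint c).norm (hαint c').norm
        exact Integrable.mono' hbound hmeas.aestronglyMeasurable
          (Filter.Eventually.of_forall fun ω => le_of_eq (hnorm ω))
    -- off-diagonal terms vanish
    have hzero : ∀ c c' : Fin C, c ≠ c' →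
        ∫ ω, (α c ω * cE1 τ k₁ (τc c ω) * cE2 τ p (vc c ω))
          * (starRingEnd ℂ) (α c' ω * cE1 τ k₂ (τc c' ω) * cE2 τ (p + l) (vc c' ω)) = 0 := by
      intro c c' hcc
      have hZ := clutter_indep_triples hindep hm hcc
      have hFm : Measurable (fun z : ℂ × ℝ × ℝ => z.1 * cE1 τ k₁ z.2.1 * cE2 τ p z.2.2) :=
        (measurable_fst.mul ((cE1_meas τ k₁).comp (measurable_fst.comp measurable_snd))).mul
          ((cE2_meas τ p).comp (measurable_snd.comp measurable_snd))
      have hGm : Measurable (fun z : ℂ × ℝ × ℝ =>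
          (starRingEnd ℂ) (z.1 * cE1 τ k₂ z.2.1 * cE2 τ (p + l) z.2.2)) :=
        mconj.comp ((measurable_fst.mul
          ((cE1_meas τ k₂).comp (measurable_fst.comp measurable_snd))).mul
          ((cE2_meas τ (p + l)).comp (measurable_snd.comp measurable_snd)))
      have hIF : IndepFun (fun ω => α c ω * cE1 τ k₁ (τc c ω) * cE2 τ p (vc c ω))
          (fun ω => (starRingEnd ℂ) (α c' ω * cE1 τ k₂ (τc c' ω) * cE2 τ (p + l) (vc c' ω)))
          (ℙ : Measure Ω) := hZ.comp hFm hGm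
      rw [indep_integral_mul_ℂ hIF (hTmeas p k₁ c).aemeasurable
        (mconj.comp (hTmeas (p + l) k₂ c')).aemeasurable, hTmean p k₁ c, zero_mul]
    -- diagonal terms
    have hdiag : ∀ c : Fin C,
        ∫ ω, (α c ω * cE1 τ k₁ (τc c ω) * cE2 τ p (vc c ω))
          * (starRingEnd ℂ) (α c ω * cE1 τ k₂ (τc c ω) * cE2 τ (p + l) (vc c ω))
        = ((σc : ℂ)) ^ 2 * (if k₁ = k₂ then 1 else 0) * κ := by
      intro c
      set gfun : ℝ → ℂ := fun t =>
        Complex.exp (-2 * (π : ℂ) * Complex.I * (((k₁ - k₂ : ℤ)) : ℂ) * (t : ℂ) / (τ : ℂ))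
        with hgfun
      set hfun : ℝ → ℂ := fun v => Complex.exp (Complex.I * ((l * τ : ℝ) : ℂ) * (v : ℂ))
        with hhfun
      have hgm : Measurable gfun := by rw [hgfun]; fun_prop
      have hhm : Measurable hfun := by rw [hhfun]; fun_prop
      have hpt : ∀ ω, (α c ω * cE1 τ k₁ (τc c ω) * cE2 τ p (vc c ω))
          * (starRingEnd ℂ) (α c ω * cE1 τ k₂ (τc c ω) * cE2 τ (p + l) (vc c ω))
          = ((‖α c ω‖ ^ 2 : ℝ) : ℂ) * (gfun (τc c ω) * hfun (vc c ω)) := by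
        intro ω
        rw [map_mul, map_mul]
        rw [show (α c ω * cE1 τ k₁ (τc c ω) * cE2 τ p (vc c ω))
            * ((starRingEnd ℂ) (α c ω) * (starRingEnd ℂ) (cE1 τ k₂ (τc c ω))
              * (starRingEnd ℂ) (cE2 τ (p + l) (vc c ω)))
            = (α c ω * (starRingEnd ℂ) (α c ω))
              * ((cE1 τ k₁ (τc c ω) * (starRingEnd ℂ) (cE1 τ k₂ (τc c ω)))
              * (cE2 τ p (vc c ω) * (starRingEnd ℂ) (cE2 τ (p + l) (vc c ω)))) from by ring]
        rw [Complex.mul_conj, cE1_mul_conj, cE2_mul_conj, Complex.normSq_eq_norm_sq]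
      have hfm : Measurable (fun z : ℂ => ((‖z‖ ^ 2 : ℝ) : ℂ)) :=
        Complex.measurable_ofReal.comp (continuous_norm.measurable.pow_const 2)
      have hφm : Measurable (fun q : ℝ × ℝ => gfun q.1 * hfun q.2) :=
        (hgm.comp measurable_fst).mul (hhm.comp measurable_snd)
      have hI1 : IndepFun (fun ω => ((‖α c ω‖ ^ 2 : ℝ) : ℂ))
          (fun ω => gfun (τc c ω) * hfun (vc c ω)) (ℙ : Measure Ω) :=
        (hpairall c).symm.comp hfm hφm
      have hτv : IndepFun (τc c) (vc c) (ℙ : Measure Ω) :=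
        hindep.indepFun (show (Sum.inr (Sum.inl c) : Fin C ⊕ Fin C ⊕ Fin C)
          ≠ Sum.inr (Sum.inr c) by simp)
      have hI2 : IndepFun (fun ω => gfun (τc c ω)) (fun ω => hfun (vc c ω)) (ℙ : Measure Ω) :=
        hτv.comp hgm hhm
      have hg_int : ∫ ω, gfun (τc c ω) = if k₁ = k₂ then 1 else 0 := by
        rw [← integral_map (hτcm c).aemeasurable hgm.aestronglyMeasurable, hτunif c, hgfun]
        rw [uniform_exp_integral hτ (k₁ - k₂)]
        simp [sub_eq_zero]
      have hh_int : ∫ ω, hfun (vc c ω) = κ := by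
        rw [← integral_map (hvcm c).aemeasurable hhm.aestronglyMeasurable, hvgauss c, hhfun]
        rw [gaussian_char (sq_nonneg σd) (l * τ), hκ]
        congr 1
        push_cast
        ring
      have ha_int : ∫ ω, ((‖α c ω‖ ^ 2 : ℝ) : ℂ) = ((σc : ℂ)) ^ 2 := by
        have h1 : ∫ ω, ((‖α c ω‖ ^ 2 : ℝ) : ℂ)
            = ((∫ ω, ‖α c ω‖ ^ 2 : ℝ) : ℂ) := integral_ofReal
        rw [h1, hαvar c]
        norm_cast
      calc ∫ ω, (α c ω * cE1 τ k₁ (τc c ω) * cE2 τ p (vc c ω))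
            * (starRingEnd ℂ) (α c ω * cE1 τ k₂ (τc c ω) * cE2 τ (p + l) (vc c ω))
          = ∫ ω, ((‖α c ω‖ ^ 2 : ℝ) : ℂ) * (gfun (τc c ω) * hfun (vc c ω)) :=
            integral_congr_ae (Filter.Eventually.of_forall fun ω => hpt ω)
        _ = (∫ ω, ((‖α c ω‖ ^ 2 : ℝ) : ℂ))
              * ∫ ω, gfun (τc c ω) * hfun (vc c ω) :=
            indep_integral_mul_ℂ hI1 (hfm.comp (hαm c)).aemeasurable
              ((hgm.comp (hτcm c)).mul (hhm.comp (hvcm c))).aemeasurable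
        _ = (∫ ω, ((‖α c ω‖ ^ 2 : ℝ) : ℂ))
              * ((∫ ω, gfun (τc c ω)) * ∫ ω, hfun (vc c ω)) := by
            rw [indep_integral_mul_ℂ hI2 (hgm.comp (hτcm c)).aemeasurable
              (hhm.comp (hvcm c)).aemeasurable]
        _ = ((σc : ℂ)) ^ 2 * (if k₁ = k₂ then 1 else 0) * κ := by
            rw [ha_int, hg_int, hh_int, mul_assoc]
    -- put it together
    calc ∫ ω, clutterCoeff τ α τc vc p k₁ ω
          * (starRingEnd ℂ) (clutterCoeff τ α τc vc (p + l) k₂ ω)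
        = (1 / (τ : ℂ) * (1 / (τ : ℂ)))
            * ∑ c, ∑ c', ∫ ω, (α c ω * cE1 τ k₁ (τc c ω) * cE2 τ p (vc c ω))
              * (starRingEnd ℂ) (α c' ω * cE1 τ k₂ (τc c' ω) * cE2 τ (p + l) (vc c' ω)) := by
          simp_rw [step1]
          rw [integral_const_mul, integral_finset_sum _
            (fun c _ => integrable_finset_sum _ (fun c' _ => hSint c c'))]
          congr 1
          exact Finset.sum_congr rfl fun c _ => integral_finset_sum _ (fun c' _ => hSint c c')
      _ = (1 / (τ : ℂ) * (1 / (τ : ℂ)))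
            * ∑ _c : Fin C, ((σc : ℂ)) ^ 2 * (if k₁ = k₂ then 1 else 0) * κ := by
          congr 1
          refine Finset.sum_congr rfl fun c _ => ?_
          rw [Finset.sum_eq_single c (fun c' _ hne => hzero c c' (Ne.symm hne))
            (by simp)]
          exact hdiag c
      _ = (1 / (τ : ℂ) ^ 2) * (C : ℂ) * (σc : ℂ) ^ 2 * (if k₁ = k₂ then 1 else 0) * κ := by
          rw [Finset.sum_const, Finset.card_univ, Fintype.card_fin, nsmul_eq_mul]
          ring
end

section
/- Let N, K, L be natural numbers with 2L ≤ K ≤ N, and let A be the K × N complex matrix with entries A_{k,n} = exp(−2πi k n / N) for 0 ≤ k ≤ K−1 and 0 ≤ n ≤ N−1 (the first K rows of the N × N DFT matrix). If x, y ∈ ℂ^N each have at most L nonzero entries and A x = A y, then x = y. In other words, any vector with at most L nonzero entries is uniquely determined among all such vectors by its first 2L discrete Fourier coefficients. -/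
open Real Matrix

private lemma node_inj {N : ℕ} (a b : Fin N) 
    (h : Complex.exp (-2 * (π : ℂ) * Complex.I * ((a : ℕ) : ℂ) / (N : ℂ)) =
         Complex.exp (-2 * (π : ℂ) * Complex.I * ((b : ℕ) : ℂ) / (N : ℂ))) : a = b := by
  have hN : (0 : ℕ) < N := a.pos
  have hNC : (N : ℂ) ≠ 0 := by exact_mod_cast hN.ne'
  rw [Complex.exp_eq_exp_iff_exists_int] at h
  obtain ⟨t, ht⟩ := h
  -- derive (a - b : ℂ) = -t * N
  have key : ((a : ℕ) : ℂ) - ((b : ℕ) : ℂ) = (-t : ℤ) * N := by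
    have h2 : (2 * (π : ℂ) * Complex.I * N) ≠ 0 := by
      simp [Real.pi_ne_zero, Complex.I_ne_zero, Complex.ofReal_ne_zero, hNC]
    field_simp at ht
    have : (2 * (π : ℂ) * Complex.I * N) * (((a:ℕ):ℂ) - ((b:ℕ):ℂ)) =
        (2 * (π : ℂ) * Complex.I * N) * ((-t : ℤ) * N) := by
      push_cast at ht ⊢
      linear_combination (-(2 * (π : ℂ) * Complex.I * N)) * ht
    exact mul_left_cancel₀ h2 this
  have keyZ : ((a : ℕ) : ℤ) - ((b : ℕ) : ℤ) = (-t) * N := by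
    exact_mod_cast key
  have habs : |((a : ℕ) : ℤ) - ((b : ℕ) : ℤ)| < N := by
    have ha := a.isLt
    have hb := b.isLt
    rw [abs_lt]
    constructor <;> omega
  have : ((a : ℕ) : ℤ) - ((b : ℕ) : ℤ) = 0 :=
    Int.eq_zero_of_abs_lt_dvd ⟨-t, by linarith [keyZ]⟩ habs
  have : (a : ℕ) = (b : ℕ) := by omega
  exact Fin.ext this

/-- An `L`-sparse vector is uniquely determined among `L`-sparse vectors by its first
`K ≥ 2L` discrete Fourier coefficients (consecutive rows of the `N × N` DFT matrix). -/
theorem partial_dft_sparse_uniqueness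
    (N K L : ℕ) (hKL : 2 * L ≤ K) (hKN : K ≤ N)
    (A : Matrix (Fin K) (Fin N) ℂ)
    (hA : ∀ (k : Fin K) (n : Fin N),
      A k n = Complex.exp (-2 * (π : ℂ) * Complex.I * ((k : ℕ) : ℂ) * ((n : ℕ) : ℂ) / (N : ℂ)))
    (x y : Fin N → ℂ)
    (hx : (Finset.univ.filter fun n => x n ≠ 0).card ≤ L)
    (hy : (Finset.univ.filter fun n => y n ≠ 0).card ≤ L)
    (hxy : A.mulVec x = A.mulVec y) :
    x = y := by
  set z : Fin N → ℂ := x - y with hzdef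
  suffices hz0 : z = 0 by
    funext n
    have := congrFun hz0 n
    simpa [hzdef, sub_eq_zero] using this
  have hAz : A.mulVec z = 0 := by
    rw [hzdef, Matrix.mulVec_sub, hxy, sub_self]
  set S : Finset (Fin N) := Finset.univ.filter (fun n => z n ≠ 0) with hSdef
  have hSsub : S ⊆ (Finset.univ.filter fun n => x n ≠ 0) ∪
      (Finset.univ.filter fun n => y n ≠ 0) := by
    intro n hn
    simp only [hSdef, Finset.mem_filter, Finset.mem_univ, true_and] at hn
    simp only [Finset.mem_union, Finset.mem_filter, Finset.mem_univ, true_and]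
    by_contra hc
    push_neg at hc
    exact hn (by simp [hzdef, hc.1, hc.2])
  have hScard : S.card ≤ K := by
    calc S.card ≤ _ := Finset.card_le_card hSsub
    _ ≤ _ + _ := Finset.card_union_le _ _
    _ ≤ L + L := Nat.add_le_add hx hy
    _ ≤ K := by omega
  set s := S.card with hs
  -- enumeration of the support
  let E : S ≃ Fin s := S.equivFin
  let e : Fin s → Fin N := fun i => (E.symm i : Fin N)
  have he : Function.Injective e := fun i j h => by
    apply E.symm.injective
    exact Subtype.ext h
  have hemem : ∀ i, e i ∈ S := fun i => (E.symm i).2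
  have himg : Finset.image e Finset.univ = S := by
    apply Finset.eq_of_subset_of_card_le
    · intro n hn
      obtain ⟨i, _, rfl⟩ := Finset.mem_image.mp hn
      exact hemem i
    · rw [Finset.card_image_of_injective _ he]
      simp [hs]
  -- the nodes
  let v : Fin s → ℂ := fun i =>
    Complex.exp (-2 * (π : ℂ) * Complex.I * ((e i : ℕ) : ℂ) / (N : ℂ))
  have hv : Function.Injective v := fun i j h => he (node_inj _ _ h)
  let c : Fin s → ℂ := fun i => z (e i)
  -- Vandermonde system
  have hsys : (Matrix.vandermonde v)ᵀ.mulVec c = 0 := by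
    funext k
    have hkK : (k : ℕ) < K := lt_of_lt_of_le k.isLt hScard
    have h0 := congrFun hAz ⟨k, hkK⟩
    simp only [Matrix.mulVec, dotProduct, Pi.zero_apply] at h0 ⊢
    rw [show (0:ℂ) = ∑ n : Fin N, A ⟨k, hkK⟩ n * z n from h0.symm]
    have hzero : ∀ n ∈ Finset.univ, n ∉ S → A ⟨k, hkK⟩ n * z n = 0 := by
      intro n _ hn
      simp only [hSdef, Finset.mem_filter, Finset.mem_univ, true_and, not_not] at hn
      simp [hn]
    rw [← Finset.sum_subset (Finset.subset_univ S) hzero, ← himg,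
      Finset.sum_image (fun i _ j _ h => he h)]
    apply Finset.sum_congr rfl
    intro i _
    have : A ⟨k, hkK⟩ (e i) = v i ^ (k : ℕ) := by
      rw [hA, ← Complex.exp_nat_mul]
      congr 1
      ring
    rw [Matrix.transpose_apply, Matrix.vandermonde_apply, this]
  have hdet : (Matrix.vandermonde v)ᵀ.det ≠ 0 := by
    rw [Matrix.det_transpose]
    exact Matrix.det_vandermonde_ne_zero_iff.mpr hv
  have hc0 : c = 0 := Matrix.eq_zero_of_mulVec_eq_zero hdet hsys
  funext n
  by_cases hn : n ∈ S
  · obtain ⟨i, _, rfl⟩ := Finset.mem_image.mp (himg ▸ hn)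
    exact congrFun hc0 i
  · simp only [hSdef, Finset.mem_filter, Finset.mem_univ, true_and, not_not] at hn
    exact hn
end

section
/- Let N, K, L, P be natural numbers with 2L ≤ K ≤ N and P ≥ 1, and let A be the K × N complex matrix with entries A_{k,n} = exp(−2πi k n / N) for 0 ≤ k ≤ K−1, 0 ≤ n ≤ N−1. If X, Y ∈ ℂ^{N×P} are matrices each having at most L nonzero entries in total, and A·X = A·Y, then X = Y. That is, in the noiseless on-grid setting, a target scene with L targets (encoded as an N × P matrix with L nonzero entries, one per target at its delay-Doppler grid index) is uniquely determined by K ≥ 2L Fourier coefficients per pulse. -/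
open Real

set_option maxHeartbeats 1000000 in

/-- A target scene encoded as an `N × P` matrix with at most `L` nonzero entries is uniquely
determined by `K ≥ 2L` consecutive discrete Fourier coefficients per pulse. -/
theorem partial_dft_sparse_matrix_uniqueness
    (N K L P : ℕ) (hKL : 2 * L ≤ K) (hKN : K ≤ N) (hP : 1 ≤ P)
    (A : Matrix (Fin K) (Fin N) ℂ)
    (hA : ∀ (k : Fin K) (n : Fin N),
      A k n = Complex.exp (-2 * (π : ℂ) * Complex.I * ((k : ℕ) : ℂ) * ((n : ℕ) : ℂ) / (N : ℂ)))
    (X Y : Matrix (Fin N) (Fin P) ℂ)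
    (hX : (Finset.univ.filter fun q : Fin N × Fin P => X q.1 q.2 ≠ 0).card ≤ L)
    (hY : (Finset.univ.filter fun q : Fin N × Fin P => Y q.1 q.2 ≠ 0).card ≤ L)
    (hXY : A * X = A * Y) :
    X = Y := by
  rcases Nat.eq_zero_or_pos N with hN | hN
  · subst hN
    ext n p
    exact absurd n.2 (by omega)
  -- the base points z n = exp(-2πi n / N)
  set z : Fin N → ℂ := fun n => Complex.exp (-2 * (π : ℂ) * Complex.I * ((n : ℕ) : ℂ) / (N : ℂ))
    with hz
  -- z as powers of a primitive root
  have hzpow : ∀ n : Fin N,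
      z n = ((Complex.exp (2 * π * Complex.I / N))⁻¹) ^ (n : ℕ) := by
    intro n
    show Complex.exp (-2 * (π : ℂ) * Complex.I * ((n : ℕ) : ℂ) / (N : ℂ)) = _
    rw [← Complex.exp_neg, ← Complex.exp_nat_mul]
    congr 1
    ring
  have hprim : IsPrimitiveRoot ((Complex.exp (2 * π * Complex.I / N))⁻¹) N :=
    (Complex.isPrimitiveRoot_exp N (by omega)).inv
  have hzinj : Function.Injective z := by
    intro n m h
    rw [hzpow, hzpow] at h
    exact Fin.ext (hprim.pow_inj n.2 m.2 h)
  -- A in terms of powers of z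
  have hAz : ∀ (k : Fin K) (n : Fin N), A k n = z n ^ (k : ℕ) := by
    intro k n
    rw [hA]
    show _ = Complex.exp (-2 * (π : ℂ) * Complex.I * ((n : ℕ) : ℂ) / (N : ℂ)) ^ (k : ℕ)
    rw [← Complex.exp_nat_mul]
    congr 1
    ring
  -- the per-column linear conditions
  have hcol : ∀ (p : Fin P) (k : Fin K),
      ∑ n : Fin N, (X n p - Y n p) * z n ^ (k : ℕ) = 0 := by
    intro p k
    have h := congrFun (congrFun hXY k) p
    simp only [Matrix.mul_apply] at h
    have : ∑ n : Fin N, A k n * (X n p - Y n p) = 0 := by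
      simp only [mul_sub, Finset.sum_sub_distrib, h, sub_self]
    calc ∑ n : Fin N, (X n p - Y n p) * z n ^ (k : ℕ)
        = ∑ n : Fin N, A k n * (X n p - Y n p) := by
          refine Finset.sum_congr rfl fun n _ => ?_
          rw [hAz, mul_comm]
      _ = 0 := this
  -- main claim: each column of the difference vanishes
  suffices h : ∀ (p : Fin P) (n : Fin N), X n p - Y n p = 0 by
    ext n p
    have := h p n
    linear_combination this
  intro p
  set d : Fin N → ℂ := fun n => X n p - Y n p with hd
  set S : Finset (Fin N) := Finset.univ.filter fun n => d n ≠ 0 with hS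
  -- support bound
  have hScard : S.card ≤ K := by
    have hmap : S.image (fun n => ((n, p) : Fin N × Fin P)) ⊆
        (Finset.univ.filter fun q : Fin N × Fin P => X q.1 q.2 ≠ 0) ∪
        (Finset.univ.filter fun q : Fin N × Fin P => Y q.1 q.2 ≠ 0) := by
      intro q hq
      simp only [Finset.mem_image, hS, Finset.mem_filter, Finset.mem_univ, true_and] at hq
      obtain ⟨n, hn, rfl⟩ := hq
      simp only [Finset.mem_union, Finset.mem_filter, Finset.mem_univ, true_and]
      by_contra hc
      push_neg at hc
      exact hn (by rw [hd]; simp [hc.1, hc.2])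
    have hinj : Set.InjOn (fun n => ((n, p) : Fin N × Fin P)) S := by
      intro a _ b _ h
      exact (Prod.mk.injEq _ _ _ _).mp h |>.1
    calc S.card = (S.image (fun n => ((n, p) : Fin N × Fin P))).card :=
          (Finset.card_image_of_injOn hinj).symm
      _ ≤ _ := Finset.card_le_card hmap
      _ ≤ L + L := (Finset.card_union_le _ _).trans (add_le_add hX hY)
      _ ≤ K := by omega
  -- enumerate the support
  set s : ℕ := S.card with hscard
  have hsK : s ≤ K := hScard
  set e : Fin s ↪o Fin N := S.orderEmbOfFin rfl with he
  have heS : ∀ i : Fin s, e i ∈ S := fun i => S.orderEmbOfFin_mem rfl i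
  -- restrict the sums to the support
  have hsum : ∀ k : Fin s, ∑ i : Fin s, d (e i) * (z (e i)) ^ (k : ℕ) = 0 := by
    intro k
    have hk : (k : ℕ) < K := lt_of_lt_of_le k.2 hsK
    have h1 := hcol p ⟨(k : ℕ), hk⟩
    have h1' : ∑ n : Fin N, d n * z n ^ (k : ℕ) = 0 := by
      simp only [hd]
      exact h1
    have h2 : ∑ n ∈ S, d n * z n ^ (k : ℕ) = ∑ n : Fin N, d n * z n ^ (k : ℕ) := by
      refine Finset.sum_subset (Finset.subset_univ S) ?_
      intro n _ hn
      have hd0 : d n = 0 := by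
        by_contra hc
        exact hn (by simp [hS, hc])
      rw [hd0, zero_mul]
    have h3 : ∑ i : Fin s, d (e i) * (z (e i)) ^ (k : ℕ)
        = ∑ n ∈ S, d n * z n ^ (k : ℕ) := by
      refine Finset.sum_bij (fun i _ => e i) (fun i _ => heS i) ?_ ?_ ?_
      · intro a _ b _ h
        exact e.injective h
      · intro n hn
        have : n ∈ Set.range (e : Fin s → Fin N) := by
          rw [he, Finset.range_orderEmbOfFin]
          exact hn
        obtain ⟨i, hi⟩ := this
        exact ⟨i, Finset.mem_univ i, hi⟩
      · intro i _
        rfl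
    rw [h3, h2, h1']
  -- Vandermonde argument
  have hvinj : Function.Injective (fun i : Fin s => z (e i)) :=
    hzinj.comp e.injective
  have hdz : (fun i : Fin s => d (e i)) = 0 :=
    Matrix.eq_zero_of_forall_pow_sum_mul_pow_eq_zero hvinj hsum
  intro n
  by_cases hn : n ∈ S
  · have : ∃ i : Fin s, e i = n := by
      have hrange := Finset.range_orderEmbOfFin S (rfl : S.card = s)
      have : n ∈ Set.range (e : Fin s → Fin N) := by
        rw [he, hrange]
        exact hn
      exact this
    obtain ⟨i, rfl⟩ := this
    have := congrFun hdz i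
    simpa [hd] using this
  · have : d n = 0 := by
      by_contra hc
      exact hn (by simp [hS, hc])
    simpa [hd] using this
end

section
/- Let N, K, P₁, P₂, L be natural numbers with 2L ≤ K ≤ N and 2L ≤ P₂ ≤ P₁. Let A be the K × N complex matrix with entries A_{k,n} = exp(−2πi k n / N) for 0 ≤ k ≤ K−1, 0 ≤ n ≤ N−1, and let B be the P₂ × P₁ complex matrix with entries B_{p,m} = exp(−2πi p m / P₁) for 0 ≤ p ≤ P₂−1, 0 ≤ m ≤ P₁−1 (consecutive rows of the respective DFT matrices). If X, Y ∈ ℂ^{N×P₁} are matrices each having at most L nonzero entries in total, and A·X·Bᵀ = A·Y·Bᵀ, then X = Y. -/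
open Real

lemma vand_ker {n : ℕ} (w : Fin n → ℂ) (hw : Function.Injective w)
    (u : Fin n → ℂ) (h : ∀ i : Fin n, ∑ j, w j ^ (i : ℕ) * u j = 0) : u = 0 := by
  have hdet : (Matrix.vandermonde w).transpose.det ≠ 0 := by
    rw [Matrix.det_transpose, Matrix.det_vandermonde]
    refine Finset.prod_ne_zero_iff.mpr fun i _ => Finset.prod_ne_zero_iff.mpr fun j hj => ?_
    have hij : i < j := Finset.mem_Ioi.mp hj
    intro hz
    exact hij.ne (hw (sub_eq_zero.mp hz)).symm
  refine Matrix.eq_zero_of_mulVec_eq_zero hdet ?_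
  funext i
  simpa [Matrix.mulVec, Matrix.transpose, Matrix.vandermonde, dotProduct] using h i

lemma dft_vec (Nn K : ℕ) (hK : K ≤ Nn) (v : Fin Nn → ℂ)
    (hs : (Finset.univ.filter fun n : Fin Nn => v n ≠ 0).card ≤ K)
    (h : ∀ k : Fin K, ∑ n : Fin Nn,
      Complex.exp (-2 * (π : ℂ) * Complex.I * ((k : ℕ) : ℂ) * ((n : ℕ) : ℂ) / (Nn : ℂ)) * v n = 0) :
    v = 0 := by
  rcases Nat.eq_zero_or_pos Nn with hN0 | hN0
  · funext n; exact absurd n.2 (by omega)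
  set ζ : ℂ := Complex.exp (-2 * (π : ℂ) * Complex.I / (Nn : ℂ)) with hζ
  have hprim : IsPrimitiveRoot ζ Nn := by
    have h1 := (Complex.isPrimitiveRoot_exp Nn hN0.ne').inv
    rw [← Complex.exp_neg] at h1
    convert h1 using 2
    · rfl
    ring
  have hxinj : Function.Injective fun n : Fin Nn => ζ ^ (n : ℕ) := by
    intro a b hab
    exact Fin.ext (hprim.pow_inj a.2 b.2 hab)
  set S := Finset.univ.filter fun n : Fin Nn => v n ≠ 0 with hS
  have e := S.orderIsoOfFin (rfl : S.card = S.card)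
  set s := S.card with hscard
  set w : Fin s → ℂ := fun i => ζ ^ ((e i : Fin Nn) : ℕ) with hw
  have hwinj : Function.Injective w := by
    intro a b hab
    exact e.injective (Subtype.ext (hxinj hab))
  have hsK : s ≤ K := hs
  have key : ∀ i : Fin s, ∑ j, w j ^ (i : ℕ) * v (e j) = 0 := by
    intro i
    have hk : (i : ℕ) < K := lt_of_lt_of_le i.2 hsK
    have h0 := h ⟨i, hk⟩
    have hterm : ∀ n : Fin Nn,
        Complex.exp (-2 * (π : ℂ) * Complex.I * ((i : ℕ) : ℂ) * ((n : ℕ) : ℂ) / (Nn : ℂ))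
          = (ζ ^ ((n : ℕ))) ^ ((i : ℕ)) := by
      intro n
      rw [hζ, ← Complex.exp_nat_mul, ← Complex.exp_nat_mul]
      congr 1
      field_simp
    have h0' : ∑ n : Fin Nn, (ζ ^ ((n : ℕ))) ^ ((i : ℕ)) * v n = 0 := by
      rw [← h0]
      exact Finset.sum_congr rfl fun n _ => by rw [hterm n]
    have hsub : ∑ n ∈ S, (ζ ^ ((n : ℕ))) ^ ((i : ℕ)) * v n
        = ∑ n : Fin Nn, (ζ ^ ((n : ℕ))) ^ ((i : ℕ)) * v n := by
      refine Finset.sum_subset (Finset.subset_univ _) fun n _ hn => ?_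
      have : v n = 0 := by
        by_contra hv
        exact hn (Finset.mem_filter.mpr ⟨Finset.mem_univ _, hv⟩)
      simp [this]
    have h1 : ∑ n ∈ S, (ζ ^ ((n : ℕ))) ^ ((i : ℕ)) * v n = 0 := hsub.trans h0'
    rw [← Finset.sum_attach S (fun n => (ζ ^ ((n : ℕ))) ^ ((i : ℕ)) * v n)] at h1
    rw [Fintype.sum_equiv e.toEquiv (fun j : Fin s => w j ^ (i : ℕ) * v (e j))
      (fun x : {x // x ∈ S} => (ζ ^ (((x : Fin Nn)) : ℕ)) ^ ((i : ℕ)) * v x) (fun j => rfl)]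
    simpa using h1
  have hu : (fun j : Fin s => v (e j)) = 0 := vand_ker w hwinj _ key
  funext n
  by_cases hn : n ∈ S
  · have := congrFun hu (e.symm ⟨n, hn⟩)
    simpa using this
  · by_contra hv
    exact hn (Finset.mem_filter.mpr ⟨Finset.mem_univ _, hv⟩)

/-- Joint temporal–Doppler sub-Nyquist uniqueness: a target scene with at most `L` nonzero
entries is uniquely determined by `K ≥ 2L` Fourier coefficients per pulse and `P₂ ≥ 2L`
(consecutive) transmitted pulses, both sensing matrices being partial DFT matrices. -/
theorem partial_dft_doppler_sparse_uniqueness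
    (N K P₁ P₂ L : ℕ) (hKL : 2 * L ≤ K) (hKN : K ≤ N) (hPL : 2 * L ≤ P₂) (hPP : P₂ ≤ P₁)
    (A : Matrix (Fin K) (Fin N) ℂ)
    (hA : ∀ (k : Fin K) (n : Fin N),
      A k n = Complex.exp (-2 * (π : ℂ) * Complex.I * ((k : ℕ) : ℂ) * ((n : ℕ) : ℂ) / (N : ℂ)))
    (B : Matrix (Fin P₂) (Fin P₁) ℂ)
    (hB : ∀ (p : Fin P₂) (m : Fin P₁),
      B p m = Complex.exp (-2 * (π : ℂ) * Complex.I * ((p : ℕ) : ℂ) * ((m : ℕ) : ℂ) / (P₁ : ℂ)))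
    (X Y : Matrix (Fin N) (Fin P₁) ℂ)
    (hX : (Finset.univ.filter fun q : Fin N × Fin P₁ => X q.1 q.2 ≠ 0).card ≤ L)
    (hY : (Finset.univ.filter fun q : Fin N × Fin P₁ => Y q.1 q.2 ≠ 0).card ≤ L)
    (hXY : A * X * B.transpose = A * Y * B.transpose) :
    X = Y := by
  rcases Nat.eq_zero_or_pos P₁ with h0 | hP1pos
  · funext n p
    exact absurd p.2 (by omega)
  set Z : Matrix (Fin N) (Fin P₁) ℂ := X - Y with hZ
  have hZsupp : (Finset.univ.filter fun q : Fin N × Fin P₁ => Z q.1 q.2 ≠ 0).card ≤ 2 * L := by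
    have hsub : (Finset.univ.filter fun q : Fin N × Fin P₁ => Z q.1 q.2 ≠ 0)
        ⊆ (Finset.univ.filter fun q : Fin N × Fin P₁ => X q.1 q.2 ≠ 0)
          ∪ (Finset.univ.filter fun q : Fin N × Fin P₁ => Y q.1 q.2 ≠ 0) := by
      intro q hq
      simp only [Finset.mem_filter, Finset.mem_union, Finset.mem_univ, true_and] at hq ⊢
      by_contra hc
      push_neg at hc
      apply hq
      simp [hZ, Matrix.sub_apply, hc.1, hc.2]
    calc _ ≤ _ := Finset.card_le_card hsub
      _ ≤ _ := Finset.card_union_le _ _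
      _ ≤ 2 * L := by omega
  set W : Matrix (Fin N) (Fin P₂) ℂ := Z * B.transpose with hWdef
  have hAW : A * W = 0 := by
    have h1 : A * Z = A * X - A * Y := by rw [hZ, Matrix.mul_sub]
    have : A * Z * B.transpose = 0 := by
      rw [h1, Matrix.sub_mul, hXY, sub_self]
    rw [hWdef, ← Matrix.mul_assoc]
    exact this
  have hWzero : W = 0 := by
    funext n p
    have hv : (fun n : Fin N => W n p) = 0 := by
      apply dft_vec N K hKN
      · -- support bound
        set f : Fin N → Fin N × Fin P₁ :=
          fun n => (n, if h : ∃ m, Z n m ≠ 0 then h.choose else ⟨0, hP1pos⟩) with hf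
        have hmaps : ∀ n ∈ Finset.univ.filter fun n : Fin N => W n p ≠ 0,
            f n ∈ Finset.univ.filter fun q : Fin N × Fin P₁ => Z q.1 q.2 ≠ 0 := by
          intro n hn
          simp only [Finset.mem_filter, Finset.mem_univ, true_and] at hn ⊢
          have hex : ∃ m, Z n m ≠ 0 := by
            by_contra hc
            push_neg at hc
            apply hn
            simp only [hWdef, Matrix.mul_apply, Matrix.transpose_apply]
            exact Finset.sum_eq_zero fun m _ => by rw [hc m, zero_mul]
          simp only [hf, dif_pos hex]
          exact hex.choose_spec
        have hinj : Set.InjOn f (Finset.univ.filter fun n : Fin N => W n p ≠ 0) := by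
          intro a _ b _ hab
          exact congrArg Prod.fst hab
        calc _ ≤ _ := Finset.card_le_card_of_injOn f hmaps hinj
          _ ≤ 2 * L := hZsupp
          _ ≤ K := hKL
      · intro k
        have := congrFun (congrFun hAW k) p
        simp only [Matrix.mul_apply, Matrix.zero_apply] at this
        rw [← this]
        exact Finset.sum_congr rfl fun n _ => by rw [hA k n]
    exact congrFun hv n
  have hZ0 : Z = 0 := by
    funext n m
    have hv : (fun m : Fin P₁ => Z n m) = 0 := by
      apply dft_vec P₁ P₂ hPP
      · set f : Fin P₁ → Fin N × Fin P₁ := fun m => (n, m) with hf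
        have hmaps : ∀ m ∈ Finset.univ.filter fun m : Fin P₁ => Z n m ≠ 0,
            f m ∈ Finset.univ.filter fun q : Fin N × Fin P₁ => Z q.1 q.2 ≠ 0 := by
          intro m hm
          simp only [Finset.mem_filter, Finset.mem_univ, true_and] at hm ⊢
          exact hm
        have hinj : Set.InjOn f (Finset.univ.filter fun m : Fin P₁ => Z n m ≠ 0) := by
          intro a _ b _ hab
          exact congrArg Prod.snd hab
        calc _ ≤ _ := Finset.card_le_card_of_injOn f hmaps hinj
          _ ≤ 2 * L := hZsupp
          _ ≤ P₂ := hPL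
      · intro p
        have := congrFun (congrFun hWzero n) p
        simp only [hWdef, Matrix.mul_apply, Matrix.transpose_apply, Matrix.zero_apply] at this
        rw [← this]
        exact Finset.sum_congr rfl fun m _ => by rw [hB p m, mul_comm]
    exact congrFun hv m
  have := sub_eq_zero.mp hZ0
  exact this
end

section
/- Let τ > 0, P ∈ ℕ, L ∈ ℕ, and for each l < L let α_l ∈ ℂ, ν_l ∈ ℝ, and let H_k ∈ ℂ and phase factors d_l[k] = exp(−2πi k τ_l/τ) be given for each integer k (with τ_l ∈ ℝ). Suppose the slow-time coefficients are c_p[k] = (1/τ) H_k Σ_{l<L} α_l d_l[k] exp(−i ν_l p τ) for 0 ≤ p ≤ P−1. Then for every ν ∈ ℝ and every integer k, the Doppler-focused coefficient satisfies exactly Σ_{p=0}^{P−1} c_p[k] · exp(i ν p τ) = (1/τ) H_k Σ_{l<L} α_l d_l[k] · g((ν − ν_l)τ), where g(θ) = Σ_{p=0}^{P−1} exp(i p θ); moreover, if ν = ν_{l₀} for some target l₀ and |(ν_{l₀} − ν_l)τ mod 2π| ∈ (0, π] for all l ≠ l₀, then |Σ_{p=0}^{P−1} c_p[k] exp(i ν_{l₀}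 p τ) − (P/τ) H_k α_{l₀} d_{l₀}[k]| ≤ (1/τ)|H_k| Σ_{l ≠ l₀} |α_l| · π / |(ν_{l₀} − ν_l)τ mod' 2π|, where mod' denotes the representative in (−π, π]. -/
open Real


lemma my_abs_exp_I_sub_one (θ : ℝ) :
    ‖Complex.exp (Complex.I * (θ : ℂ)) - 1‖ = 2 * |Real.sin (θ / 2)| := by
  have h : Complex.exp (Complex.I * (θ : ℂ)) - 1
      = Complex.mk (Real.cos θ - 1) (Real.sin θ) := by
    rw [mul_comm, Complex.exp_mul_I]
    apply Complex.ext <;> simp [Complex.cos_ofReal_re, Complex.sin_ofReal_re]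
  rw [h, Complex.norm_def, Complex.normSq_mk]
  have hc : Real.cos θ = 1 - 2 * Real.sin (θ / 2) ^ 2 := by
    have h2 := Real.cos_two_mul' (θ / 2)
    rw [show 2 * (θ / 2) = θ by ring] at h2
    nlinarith [Real.sin_sq_add_cos_sq (θ / 2)]
  have : (Real.cos θ - 1) * (Real.cos θ - 1) + Real.sin θ * Real.sin θ
      = (2 * |Real.sin (θ / 2)|) ^ 2 := by
    rw [mul_pow, sq_abs]
    nlinarith [Real.sin_sq_add_cos_sq θ]
  rw [this, Real.sqrt_sq (by positivity)]

lemma my_dirichlet (Pn : ℕ) (θ : ℝ)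
    (h : |toIocMod Real.two_pi_pos (-π) θ| ∈ Set.Ioc (0 : ℝ) π) :
    ‖∑ p ∈ Finset.range Pn, Complex.exp (Complex.I * (p : ℂ) * (θ : ℂ))‖
      ≤ π / |toIocMod Real.two_pi_pos (-π) θ| := by
  set θ' : ℝ := toIocMod Real.two_pi_pos (-π) θ with hθ'
  obtain ⟨h0, hπ⟩ := h
  -- periodicity
  have hsub : θ - θ' = (toIocDiv Real.two_pi_pos (-π) θ : ℝ) * (2 * π) := by
    rw [hθ', toIocMod]; push_cast [zsmul_eq_mul]; ring
  set n : ℤ := toIocDiv Real.two_pi_pos (-π) θ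
  have hper : ∀ p : ℕ, Complex.exp (Complex.I * (p : ℂ) * (θ : ℂ))
      = Complex.exp (Complex.I * (θ' : ℂ)) ^ p := by
    intro p
    rw [← Complex.exp_nat_mul]
    have hθeq : (θ : ℂ) = (θ' : ℂ) + (n : ℂ) * (2 * π) := by
      have : (θ : ℝ) = θ' + (n : ℝ) * (2 * π) := by linarith [hsub]
      exact_mod_cast congrArg (Complex.ofReal) this
    rw [hθeq]
    rw [show Complex.I * (p : ℂ) * ((θ' : ℂ) + (n : ℂ) * (2 * π))
        = (p : ℂ) * (Complex.I * (θ' : ℂ)) + ((p : ℤ) * n : ℤ) * (2 * (π : ℂ) * Complex.I) by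
      push_cast; ring]
    rw [Complex.exp_add, Complex.exp_int_mul_two_pi_mul_I, mul_one]
  have hsum : (∑ p ∈ Finset.range Pn, Complex.exp (Complex.I * (p : ℂ) * (θ : ℂ)))
      = ∑ p ∈ Finset.range Pn, Complex.exp (Complex.I * (θ' : ℂ)) ^ p :=
    Finset.sum_congr rfl fun p _ => hper p
  rw [hsum]
  set z : ℂ := Complex.exp (Complex.I * (θ' : ℂ)) with hz
  have habsz : ‖z‖ = 1 := by
    rw [hz, mul_comm]; exact Complex.norm_exp_ofReal_mul_I θ'
  have hz1 : z ≠ 1 := by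
    intro hzz
    rw [hz, Complex.exp_eq_one_iff] at hzz
    obtain ⟨m, hm⟩ := hzz
    have hm' : (θ' : ℂ) = (m : ℂ) * (2 * π) := by
      have : Complex.I * (θ' : ℂ) = Complex.I * ((m : ℂ) * (2 * π)) := by
        rw [hm]; ring
      exact mul_left_cancel₀ Complex.I_ne_zero this
    have hmr : θ' = (m : ℝ) * (2 * π) := by exact_mod_cast hm'
    rcases eq_or_ne m 0 with hm0 | hm0
    · rw [hm0] at hmr; simp at hmr; rw [hmr] at h0; simp at h0
    · have : (1 : ℝ) ≤ |(m : ℝ)| := by exact_mod_cast Int.one_le_abs hm0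
      have : 2 * π ≤ |θ'| := by
        rw [hmr, abs_mul, abs_of_pos Real.two_pi_pos]
        nlinarith [Real.two_pi_pos]
      nlinarith [Real.pi_pos]
  rw [geom_sum_eq hz1, norm_div]
  have hnum : ‖z ^ Pn - 1‖ ≤ 2 := by
    calc ‖z ^ Pn - 1‖ ≤ ‖z ^ Pn‖ + ‖(1 : ℂ)‖ :=
          norm_sub_le _ _
    _ = 2 := by rw [norm_pow, habsz, norm_one]; norm_num
  have hden : ‖z - 1‖ = 2 * |Real.sin (θ' / 2)| := my_abs_exp_I_sub_one θ'
  -- sin lower bound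
  have hsin : |θ'| / π ≤ |Real.sin (θ' / 2)| := by
    have h2 : |θ'| / 2 ≤ π / 2 := by linarith
    have h1 : 2 / π * (|θ'| / 2) ≤ Real.sin (|θ'| / 2) :=
      Real.mul_le_sin (by positivity) h2
    have h3 : Real.sin (|θ'| / 2) ≤ |Real.sin (θ' / 2)| := by
      rcases abs_cases θ' with ⟨he, _⟩ | ⟨he, _⟩
      · rw [he]; exact le_abs_self _
      · rw [he, neg_div, Real.sin_neg]; exact neg_le_abs _
    have h4 : 2 / π * (|θ'| / 2) = |θ'| / π := by field_simp
    linarith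
  have hsinpos : 0 < |Real.sin (θ' / 2)| := by
    have : 0 < |θ'| / π := by positivity
    linarith
  calc ‖z ^ Pn - 1‖ / ‖z - 1‖
      ≤ 2 / (2 * |Real.sin (θ' / 2)|) := by
        rw [hden]; gcongr
    _ = 1 / |Real.sin (θ' / 2)| := by field_simp
    _ ≤ π / |θ'| := by
        rw [div_le_div_iff₀ hsinpos (by positivity)]
        rw [div_le_iff₀ Real.pi_pos] at hsin
        nlinarith

/-- Doppler focusing: exact identity for the slow-time DFT of the per-pulse Fourier
coefficients, and the Dirichlet-kernel bound on the residual interference of off-resonance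
targets when focusing at the Doppler frequency of target `l₀`. -/
theorem doppler_focusing_identity_and_bound
    (τ : ℝ) (hτ : 0 < τ) (P L : ℕ)
    (α : Fin L → ℂ) (ν : Fin L → ℝ) (τd : Fin L → ℝ)
    (H : ℤ → ℂ) (d : Fin L → ℤ → ℂ)
    (hd : ∀ (l : Fin L) (k : ℤ),
      d l k = Complex.exp (-2 * (π : ℂ) * Complex.I * (k : ℂ) * ((τd l : ℝ) : ℂ) / (τ : ℂ)))
    (c : ℕ → ℤ → ℂ)
    (hc : ∀ (p : ℕ), p < P → ∀ k : ℤ,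
      c p k = (1 / (τ : ℂ)) * H k * ∑ l, α l * d l k
          * Complex.exp (-Complex.I * (ν l : ℂ) * (p : ℂ) * (τ : ℂ))) :
    (∀ (ν' : ℝ) (k : ℤ),
      ∑ p ∈ Finset.range P, c p k * Complex.exp (Complex.I * (ν' : ℂ) * (p : ℂ) * (τ : ℂ))
        = (1 / (τ : ℂ)) * H k * ∑ l, α l * d l k
            * ∑ p ∈ Finset.range P,
                Complex.exp (Complex.I * (p : ℂ) * (((ν' - ν l) * τ : ℝ) : ℂ))) ∧
    (∀ (l₀ : Fin L) (k : ℤ),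
      (∀ l : Fin L, l ≠ l₀ →
        |toIocMod Real.two_pi_pos (-π) ((ν l₀ - ν l) * τ)| ∈ Set.Ioc (0 : ℝ) π) →
      ‖
          ((∑ p ∈ Finset.range P,
              c p k * Complex.exp (Complex.I * ((ν l₀ : ℝ) : ℂ) * (p : ℂ) * (τ : ℂ)))
            - ((P : ℂ) / (τ : ℂ)) * H k * α l₀ * d l₀ k)‖
        ≤ (1 / τ) * ‖H k‖
            * ∑ l ∈ Finset.univ.erase l₀,
                ‖α l‖ * π / |toIocMod Real.two_pi_pos (-π) ((ν l₀ - ν l) * τ)|) := by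
  have key : ∀ (ν' : ℝ) (k : ℤ),
      ∑ p ∈ Finset.range P, c p k * Complex.exp (Complex.I * (ν' : ℂ) * (p : ℂ) * (τ : ℂ))
        = (1 / (τ : ℂ)) * H k * ∑ l, α l * d l k
            * ∑ p ∈ Finset.range P,
                Complex.exp (Complex.I * (p : ℂ) * (((ν' - ν l) * τ : ℝ) : ℂ)) := by
    intro ν' k
    have step1 : ∀ p ∈ Finset.range P,
        c p k * Complex.exp (Complex.I * (ν' : ℂ) * (p : ℂ) * (τ : ℂ))
          = ∑ l, (1 / (τ : ℂ)) * H k * (α l * d l k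
              * Complex.exp (Complex.I * (p : ℂ) * (((ν' - ν l) * τ : ℝ) : ℂ))) := by
      intro p hp
      rw [hc p (Finset.mem_range.mp hp), Finset.mul_sum, Finset.sum_mul]
      refine Finset.sum_congr rfl fun l _ => ?_
      have hexp : Complex.exp (-Complex.I * (ν l : ℂ) * (p : ℂ) * (τ : ℂ))
            * Complex.exp (Complex.I * (ν' : ℂ) * (p : ℂ) * (τ : ℂ))
          = Complex.exp (Complex.I * (p : ℂ) * (((ν' - ν l) * τ : ℝ) : ℂ)) := by
        rw [← Complex.exp_add]
        congr 1
        push_cast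
        ring
      calc (1 / (τ : ℂ)) * H k * (α l * d l k
              * Complex.exp (-Complex.I * (ν l : ℂ) * (p : ℂ) * (τ : ℂ)))
            * Complex.exp (Complex.I * (ν' : ℂ) * (p : ℂ) * (τ : ℂ))
          = (1 / (τ : ℂ)) * H k * (α l * d l k
              * (Complex.exp (-Complex.I * (ν l : ℂ) * (p : ℂ) * (τ : ℂ))
                * Complex.exp (Complex.I * (ν' : ℂ) * (p : ℂ) * (τ : ℂ)))) := by ring
        _ = _ := by rw [hexp]
    rw [Finset.sum_congr rfl step1, Finset.sum_comm]
    rw [Finset.mul_sum]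
    refine Finset.sum_congr rfl fun l _ => ?_
    rw [Finset.mul_sum, Finset.mul_sum]
  refine ⟨key, ?_⟩
  intro l₀ k hsep
  rw [key (ν l₀) k]
  set g : Fin L → ℂ := fun l => ∑ p ∈ Finset.range P,
      Complex.exp (Complex.I * (p : ℂ) * (((ν l₀ - ν l) * τ : ℝ) : ℂ)) with hg
  have hsplit : (∑ l, α l * d l k * g l)
      = α l₀ * d l₀ k * g l₀ + ∑ l ∈ Finset.univ.erase l₀, α l * d l k * g l :=
    (Finset.add_sum_erase _ _ (Finset.mem_univ l₀)).symm
  have hgl₀ : g l₀ = (P : ℂ) := by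
    rw [hg]
    simp
  have hmain : (1 / (τ : ℂ)) * H k * (∑ l, α l * d l k * g l)
        - ((P : ℂ) / (τ : ℂ)) * H k * α l₀ * d l₀ k
      = (1 / (τ : ℂ)) * H k * ∑ l ∈ Finset.univ.erase l₀, α l * d l k * g l := by
    rw [hsplit, hgl₀]; ring
  rw [hmain, norm_mul, norm_mul]
  have habs1 : ‖(1 / (τ : ℂ))‖ = 1 / τ := by
    rw [norm_div, norm_one, Complex.norm_real, Real.norm_eq_abs, abs_of_pos hτ]
  rw [habs1, mul_assoc, mul_assoc]
  apply mul_le_mul_of_nonneg_left _ (by positivity)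
  apply mul_le_mul_of_nonneg_left _ (norm_nonneg _)
  calc ‖∑ l ∈ Finset.univ.erase l₀, α l * d l k * g l‖
      ≤ ∑ l ∈ Finset.univ.erase l₀, ‖α l * d l k * g l‖ := by
        exact norm_sum_le _ _
    _ ≤ ∑ l ∈ Finset.univ.erase l₀,
          ‖α l‖ * π / |toIocMod Real.two_pi_pos (-π) ((ν l₀ - ν l) * τ)| := by
        refine Finset.sum_le_sum fun l hl => ?_
        have hl' : l ≠ l₀ := (Finset.mem_erase.mp hl).1
        have hdabs : ‖d l k‖ = 1 := by
          rw [hd l k, show -2 * (π : ℂ) * Complex.I * (k : ℂ) * ((τd l : ℝ) : ℂ) / (τ : ℂ)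
              = ((-2 * π * (k : ℝ) * τd l / τ : ℝ) : ℂ) * Complex.I by push_cast; field_simp]
          exact Complex.norm_exp_ofReal_mul_I _
        have hdir := my_dirichlet P ((ν l₀ - ν l) * τ) (hsep l hl')
        rw [norm_mul, norm_mul, hdabs, mul_one, mul_div_assoc]
        exact mul_le_mul_of_nonneg_left hdir (norm_nonneg _)
end
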